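/- Let p be prime, k ≥ 1, and S, T ⊆ ℤ/p^kℤ formally dual subsets. Then (|S|²/|T|)·ν_T(1) = ν_S(0) − ν_S(p^{k−1}). -/

import Mathlib

open Finset Complex

/-- Weight enumerator: number of ordered pairs in `S × S` with difference `y`. -/
def nuW {n : ℕ} [NeZero n] (S : Finset (ZMod n)) (y : ZMod n) : ℕ :=
  ((S ×ˢ S).filter (fun p => p.1 - p.2 = y)).card

/-- `n`-th root of unity `ζ_n = exp(2πi/n)`. -/
noncomputable def zetaC (n : ℕ) : ℂ := Complex.exp (2 * Real.pi * Complex.I / n)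

/-- Formal duality of `S, T ⊆ ℤ/nℤ` (both directions). -/
def IsFormallyDual {n : ℕ} [NeZero n] (S T : Finset (ZMod n)) : Prop :=
  S.Nonempty ∧ T.Nonempty ∧
  (∀ y : ZMod n, ((S.card : ℂ) ^ 2 / (T.card : ℂ)) * (nuW T y : ℂ) =
    ∑ v : ZMod n, (nuW S v : ℂ) * zetaC n ^ (v.val * y.val)) ∧
  (∀ y : ZMod n, ((T.card : ℂ) ^ 2 / (S.card : ℂ)) * (nuW S y : ℂ) =
    ∑ v : ZMod n, (nuW T v : ℂ) * zetaC n ^ (v.val * y.val))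

/-- Reindex a sum over `ZMod n` as a sum over `range n`. -/
lemma zmod_sum_eq_range {n : ℕ} [NeZero n] (F : ZMod n → ℂ) :
    ∑ v : ZMod n, F v = ∑ i ∈ Finset.range n, F (i : ZMod n) := by
  refine Finset.sum_nbij' (fun v => v.val) (fun i => (i : ZMod n)) ?_ ?_ ?_ ?_ ?_
  · intro v _; exact Finset.mem_range.mpr (ZMod.val_lt v)
  · intro i _; exact Finset.mem_univ _
  · intro v _; exact ZMod.natCast_rightInverse v
  · intro i hi; exact ZMod.val_cast_of_lt (Finset.mem_range.mp hi)
  · intro v _; rw [ZMod.natCast_rightInverse v]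

theorem stmt9 (p k : ℕ) [Fact p.Prime] (hk : 1 ≤ k) (S T : Finset (ZMod (p ^ k)))
    (h : IsFormallyDual S T) :
    ((S.card : ℂ) ^ 2 / (T.card : ℂ)) * (nuW T 1 : ℂ) =
      (nuW S 0 : ℂ) - (nuW S ((p ^ (k - 1) : ℕ) : ZMod (p ^ k)) : ℂ) := by
  have hp : p.Prime := Fact.out
  have hp2 : 2 ≤ p := hp.two_le
  have hm0 : 0 < p ^ (k - 1) := pow_pos hp.pos _
  have hnm : p ^ k = p ^ (k - 1) * p := by rw [← pow_succ]; congr 1; omega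
  have hmn : p ^ (k - 1) < p ^ k := by
    have h1 : p ^ (k - 1) * 2 ≤ p ^ (k - 1) * p := Nat.mul_le_mul_left _ hp2
    have h2 : p ^ (k - 1) * 2 = p ^ (k - 1) + p ^ (k - 1) := by ring
    omega
  have hn1 : 1 < p ^ k := by omega
  haveI : Fact (1 < p ^ k) := ⟨hn1⟩
  -- the primitive root
  have hζ : IsPrimitiveRoot (zetaC (p ^ k)) (p ^ k) := by
    have := Complex.isPrimitiveRoot_exp (p ^ k) (by omega)
    simpa [zetaC] using this
  -- rational data
  set q : ℚ := (S.card : ℚ) ^ 2 / (T.card : ℚ) * (nuW T 1 : ℚ) with hq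
  set a : ℕ → ℚ := fun v => (nuW S ((v : ZMod (p ^ k))) : ℚ) with ha
  set P : Polynomial ℚ :=
    (∑ v ∈ Finset.range (p ^ k), Polynomial.C (a v) * Polynomial.X ^ v) - Polynomial.C q with hP
  -- duality at y = 1
  obtain ⟨-, -, hd, -⟩ := h
  have h1 := hd 1
  rw [ZMod.val_one (p ^ k)] at h1
  simp only [mul_one] at h1
  have hsum : (∑ v : ZMod (p ^ k), (nuW S v : ℂ) * zetaC (p ^ k) ^ v.val)
      = ∑ i ∈ Finset.range (p ^ k), ((a i : ℚ) : ℂ) * zetaC (p ^ k) ^ i := by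
    rw [zmod_sum_eq_range (fun v => (nuW S v : ℂ) * zetaC (p ^ k) ^ v.val)]
    refine Finset.sum_congr rfl fun i hi => ?_
    rw [ZMod.val_cast_of_lt (Finset.mem_range.mp hi)]
    norm_num [ha]
  have hqC : ((q : ℚ) : ℂ) = ((S.card : ℂ) ^ 2 / (T.card : ℂ)) * (nuW T 1 : ℂ) := by
    rw [hq]; push_cast; ring
  have haeval : Polynomial.aeval (zetaC (p ^ k)) P = 0 := by
    rw [hP]
    simp only [map_sub, map_sum, map_mul, map_pow, Polynomial.aeval_C, Polynomial.aeval_X]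
    have hmap : ∀ x : ℚ, algebraMap ℚ ℂ x = (x : ℂ) := fun x => by
      simp [eq_ratCast]
    simp only [hmap]
    rw [← hsum, ← h1, hqC, sub_self]
  -- divisibility by the cyclotomic polynomial
  have hdvd : Polynomial.cyclotomic (p ^ k) ℚ ∣ P := by
    rw [Polynomial.cyclotomic_eq_minpoly_rat hζ (by omega)]
    exact minpoly.dvd ℚ (zetaC (p ^ k)) haeval
  obtain ⟨Q, hQ⟩ := hdvd
  -- cyclotomic polynomial as a geometric sum
  have hΦ : Polynomial.cyclotomic (p ^ k) ℚ
      = ∑ i ∈ Finset.range p, Polynomial.X ^ (p ^ (k - 1) * i) := by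
    have hkk : p ^ k = p ^ ((k - 1) + 1) := by congr 1; omega
    rw [hkk, Polynomial.cyclotomic_prime_pow_eq_geom_sum hp]
    exact Finset.sum_congr rfl fun i _ => by rw [← pow_mul]
  -- coefficients of P
  have hPcoeff : ∀ j, j < p ^ k → P.coeff j = a j - if j = 0 then q else 0 := by
    intro j hj
    rw [hP]
    simp only [Polynomial.coeff_sub, Polynomial.finset_sum_coeff, Polynomial.coeff_C_mul,
      Polynomial.coeff_X_pow, Polynomial.coeff_C, mul_ite, mul_one, mul_zero]
    rw [Finset.sum_ite_eq (Finset.range (p ^ k)) j a, if_pos (Finset.mem_range.mpr hj)]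
  have hPcoeff' : ∀ j, p ^ k ≤ j → P.coeff j = 0 := by
    intro j hj
    rw [hP]
    simp only [Polynomial.coeff_sub, Polynomial.finset_sum_coeff, Polynomial.coeff_C_mul,
      Polynomial.coeff_X_pow, Polynomial.coeff_C, mul_ite, mul_one, mul_zero]
    rw [Finset.sum_ite_eq (Finset.range (p ^ k)) j a, if_neg (by simp; omega), if_neg (by omega)]
    simp
  -- coefficients of the product
  have hcoeffmul : ∀ d, (Polynomial.cyclotomic (p ^ k) ℚ * Q).coeff d
      = ∑ i ∈ Finset.range p, if p ^ (k - 1) * i ≤ d then Q.coeff (d - p ^ (k - 1) * i) else 0 := by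
    intro d
    rw [hΦ, Finset.sum_mul, Polynomial.finset_sum_coeff]
    exact Finset.sum_congr rfl fun i _ => Polynomial.coeff_X_pow_mul' Q (p ^ (k - 1) * i) d
  -- Q.coeff (p ^ (k-1)) = 0
  have hQm : Q.coeff (p ^ (k - 1)) = 0 := by
    by_cases hQ0 : Q = 0
    · simp [hQ0]
    have hP0 : P ≠ 0 := by
      rw [hQ]; exact mul_ne_zero (Polynomial.cyclotomic_ne_zero (p ^ k) ℚ) hQ0
    have hdegP : P.natDegree < p ^ k := by
      rw [Polynomial.natDegree_lt_iff_degree_lt hP0]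
      exact (Polynomial.degree_lt_iff_coeff_zero P (p ^ k)).mpr
        (fun j hj => hPcoeff' j (by exact_mod_cast hj))
    have hdegΦ : (Polynomial.cyclotomic (p ^ k) ℚ).natDegree = p ^ k - p ^ (k - 1) := by
      rw [Polynomial.natDegree_cyclotomic, Nat.totient_prime_pow hp (by omega : 0 < k)]
      have h2 : p ^ (k - 1) * (p - 1) + p ^ (k - 1) * 1 = p ^ (k - 1) * p := by
        rw [← Nat.mul_add]; congr 1; omega
      have h3 : p ^ (k - 1) * 1 = p ^ (k - 1) := by ring
      omega
    have hmul := Polynomial.natDegree_mul (Polynomial.cyclotomic_ne_zero (p ^ k) ℚ) hQ0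
    rw [← hQ, hdegΦ] at hmul
    exact Polynomial.coeff_eq_zero_of_natDegree_lt (by omega)
  -- coefficient at 0
  have e0 : a 0 - q = Q.coeff 0 := by
    have h0 := hcoeffmul 0
    rw [← hQ, hPcoeff 0 (by omega), if_pos rfl] at h0
    rw [h0]
    rw [Finset.sum_congr rfl (g := fun i => if i = 0 then Q.coeff 0 else 0) (fun i _ => ?_)]
    · rw [Finset.sum_ite_eq' (Finset.range p) 0 (fun _ => Q.coeff 0),
        if_pos (Finset.mem_range.mpr (by omega))]
    · rcases Nat.eq_zero_or_pos i with rfl | hi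
      · simp
      · have h4 : p ^ (k - 1) ≤ p ^ (k - 1) * i := Nat.le_mul_of_pos_right _ hi
        show (if p ^ (k - 1) * i ≤ 0 then Q.coeff (0 - p ^ (k - 1) * i) else 0)
          = if i = 0 then Q.coeff 0 else 0
        rw [if_neg (by omega), if_neg (by omega)]
  -- coefficient at p ^ (k-1)
  have em : a (p ^ (k - 1)) = Q.coeff 0 := by
    have h0 := hcoeffmul (p ^ (k - 1))
    rw [← hQ, hPcoeff (p ^ (k - 1)) (by omega), if_neg (by omega), sub_zero] at h0
    rw [h0]
    rw [Finset.sum_congr rfl (g := fun i => if i = 1 then Q.coeff 0 else 0) (fun i _ => ?_)]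
    · rw [Finset.sum_ite_eq' (Finset.range p) 1 (fun _ => Q.coeff 0),
        if_pos (Finset.mem_range.mpr (by omega))]
    · match i with
      | 0 => simpa using hQm
      | 1 => simp
      | (j + 2) =>
        have h4 : p ^ (k - 1) * 2 ≤ p ^ (k - 1) * (j + 2) := Nat.mul_le_mul_left _ (by omega)
        have h5 : p ^ (k - 1) * 2 = p ^ (k - 1) + p ^ (k - 1) := by ring
        show (if p ^ (k - 1) * (j + 2) ≤ p ^ (k - 1)
            then Q.coeff (p ^ (k - 1) - p ^ (k - 1) * (j + 2)) else 0)
          = if j + 2 = 1 then Q.coeff 0 else 0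
        rw [if_neg (by omega), if_neg (by omega)]
  -- conclude
  have hfinal : q = a 0 - a (p ^ (k - 1)) := by rw [em]; linarith [e0]
  have hcast : ((q : ℚ) : ℂ) = ((a 0 : ℚ) : ℂ) - ((a (p ^ (k - 1)) : ℚ) : ℂ) := by
    exact_mod_cast congrArg (fun x : ℚ => (x : ℂ)) hfinal
  rw [← hqC, hcast]
  have ha0 : ((a 0 : ℚ) : ℂ) = (nuW S 0 : ℂ) := by simp [ha]
  have ham : ((a (p ^ (k - 1)) : ℚ) : ℂ)
      = (nuW S ((p ^ (k - 1) : ℕ) : ZMod (p ^ k)) : ℂ) := by simp [ha]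
  rw [ha0, ham]
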